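/- Let A : L²([0,1], ℝ) → L²([0,1], ℝ) be the Volterra integral operator defined by (A f)(s) = ∫_0^s f(t) dt. Then the operator norm of A (with respect to the L² norm) equals 2/π. -/

import Mathlib

open Real MeasureTheory Set intervalIntegral
open scoped ENNReal

lemma hd_sin (x : ℝ) : HasDerivAt (fun x : ℝ => 2 / π * Real.sin (π * x / 2))
    (Real.cos (π * x / 2)) x := by
  have h : HasDerivAt (fun x : ℝ => π * x / 2) (π / 2) x := by
    simpa using ((hasDerivAt_id x).const_mul π).div_const 2
  have := ((Real.hasDerivAt_sin (π * x / 2)).comp x h).const_mul (2 / π)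
  refine this.congr_deriv ?_
  field_simp

lemma hd_cos (x : ℝ) : HasDerivAt (fun x : ℝ => -(2 / π) * Real.cos (π * x / 2))
    (Real.sin (π * x / 2)) x := by
  have h : HasDerivAt (fun x : ℝ => π * x / 2) (π / 2) x := by
    simpa using ((hasDerivAt_id x).const_mul π).div_const 2
  have := ((Real.hasDerivAt_cos (π * x / 2)).comp x h).const_mul (-(2 / π))
  refine this.congr_deriv ?_
  field_simp

lemma integral_cos_half (s : ℝ) :
    ∫ t in (0:ℝ)..s, Real.cos (π * t / 2) = 2 / π * Real.sin (π * s / 2) := by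
  rw [integral_eq_sub_of_hasDerivAt (fun x _ => hd_sin x)
    (by apply Continuous.intervalIntegrable; continuity)]
  simp

lemma integral_sin_half (t : ℝ) :
    ∫ s in t..(1:ℝ), Real.sin (π * s / 2) = 2 / π * Real.cos (π * t / 2) := by
  rw [integral_eq_sub_of_hasDerivAt (fun x _ => hd_cos x)
    (by apply Continuous.intervalIntegrable; continuity)]
  norm_num [Real.cos_pi_div_two]

lemma my_integral_cos_sq : ∫ t in (0:ℝ)..1, Real.cos (π * t / 2) ^ 2 = 1 / 2 := by
  have hd : ∀ x : ℝ, HasDerivAt (fun x : ℝ => x / 2 + Real.sin (π * x) / (2 * π))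
      (Real.cos (π * x / 2) ^ 2) x := by
    intro x
    have h : HasDerivAt (fun x : ℝ => π * x) π x := by
      simpa using (hasDerivAt_id x).const_mul π
    have := ((hasDerivAt_id x).div_const 2).add
      (((Real.hasDerivAt_sin (π * x)).comp x h).div_const (2 * π))
    refine this.congr_deriv ?_
    rw [Real.cos_sq]
    have hπ : π ≠ 0 := Real.pi_ne_zero
    field_simp
  rw [integral_eq_sub_of_hasDerivAt (fun x _ => hd x)
    (by apply Continuous.intervalIntegrable; continuity)]
  norm_num [Real.sin_pi]

lemma my_integral_sin_sq : ∫ s in (0:ℝ)..1, Real.sin (π * s / 2) ^ 2 = 1 / 2 := by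
  have hd : ∀ x : ℝ, HasDerivAt (fun x : ℝ => x / 2 - Real.sin (π * x) / (2 * π))
      (Real.sin (π * x / 2) ^ 2) x := by
    intro x
    have h : HasDerivAt (fun x : ℝ => π * x) π x := by
      simpa using (hasDerivAt_id x).const_mul π
    have := ((hasDerivAt_id x).div_const 2).sub
      (((Real.hasDerivAt_sin (π * x)).comp x h).div_const (2 * π))
    refine this.congr_deriv ?_
    have h2 : Real.sin (π * x / 2) ^ 2 = 1 - Real.cos (π * x / 2) ^ 2 := by
      have := Real.sin_sq_add_cos_sq (π * x / 2); linarith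
    rw [h2, Real.cos_sq]
    have hπ : π ≠ 0 := Real.pi_ne_zero
    field_simp
    ring
  rw [integral_eq_sub_of_hasDerivAt (fun x _ => hd x)
    (by apply Continuous.intervalIntegrable; continuity)]
  norm_num [Real.sin_pi]

lemma rpow_half_sq (x : ℝ≥0∞) : (x ^ (1/2 : ℝ)) ^ 2 = x := by
  rw [← ENNReal.rpow_natCast (x ^ (1/2:ℝ)) 2, ← ENNReal.rpow_mul]
  norm_num

lemma sq_rpow_half (x : ℝ≥0∞) : (x ^ 2) ^ (1/2 : ℝ) = x := by
  rw [← ENNReal.rpow_natCast x 2, ← ENNReal.rpow_mul]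
  norm_num

lemma volterra_upper_lintegral (f : ℝ → ℝ) (hf : Measurable f) :
    ∫⁻ s in Icc (0:ℝ) 1, ((‖∫ t in (0:ℝ)..s, f t‖₊ : ℝ≥0∞)) ^ 2
      ≤ ENNReal.ofReal (2/π) ^ 2 * ∫⁻ t in Icc (0:ℝ) 1, ((‖f t‖₊ : ℝ≥0∞)) ^ 2 := by
  set μ : Measure ℝ := volume.restrict (Icc (0:ℝ) 1) with hμ
  set C : ℝ → ℝ≥0∞ := fun t => ENNReal.ofReal (Real.cos (π * t / 2)) with hC
  set H : ℝ → ℝ≥0∞ := fun t => ((‖f t‖₊ : ℝ≥0∞)) ^ 2 * (C t)⁻¹ with hH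
  set G : ℝ → ℝ≥0∞ := fun s => ENNReal.ofReal (2/π * Real.sin (π * s / 2)) with hG
  have hCmeas : Measurable C := by
    apply Measurable.ennreal_ofReal; fun_prop
  have hHmeas : Measurable H :=
    ((hf.nnnorm.coe_nnreal_ennreal).pow_const 2).mul hCmeas.inv
  have hGmeas : Measurable G := by
    apply Measurable.ennreal_ofReal; fun_prop
  have hne1 : ∀ᵐ t : ℝ ∂volume, t ≠ (1:ℝ) := by
    refine ae_iff.2 ?_
    simp only [ne_eq, not_not, Set.setOf_eq_eq_singleton]
    exact Real.volume_singleton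
  -- Step 1 : pointwise bound
  have step1 : ∀ s ∈ Icc (0:ℝ) 1, ((‖∫ t in (0:ℝ)..s, f t‖₊ : ℝ≥0∞)) ^ 2
      ≤ G s * ∫⁻ t in Ioc (0:ℝ) s, H t := by
    intro s hs
    have h1 : ((‖∫ t in (0:ℝ)..s, f t‖₊ : ℝ≥0∞)) ≤ ∫⁻ t in Ioc (0:ℝ) s, (‖f t‖₊ : ℝ≥0∞) := by
      rw [intervalIntegral.integral_of_le hs.1]
      exact enorm_integral_le_lintegral_enorm _
    have hae : (fun t => (‖f t‖₊ : ℝ≥0∞))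
        =ᵐ[volume.restrict (Ioc (0:ℝ) s)] fun t => (H t) ^ (1/2:ℝ) * (C t) ^ (1/2:ℝ) := by
      filter_upwards [ae_restrict_mem measurableSet_Ioc, ae_restrict_of_ae hne1] with t ht htne
      have hcos : 0 < Real.cos (π * t / 2) := by
        apply Real.cos_pos_of_mem_Ioo
        constructor
        · nlinarith [Real.pi_pos, ht.1]
        · have hts : t ≤ s := ht.2
          have : t < 1 := lt_of_le_of_ne (hts.trans hs.2) htne
          nlinarith [Real.pi_pos]
      have hC0 : C t ≠ 0 := by simp [hC, ENNReal.ofReal_pos.2 hcos, ne_of_gt]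
      have hCtop : C t ≠ ⊤ := ENNReal.ofReal_ne_top
      rw [← ENNReal.mul_rpow_of_nonneg _ _ (by norm_num : (0:ℝ) ≤ 1/2), hH]
      rw [mul_assoc, ENNReal.inv_mul_cancel hC0 hCtop, mul_one, sq_rpow_half]
    have conj22 : Real.HolderConjugate 2 2 := Real.HolderConjugate.two_two
    have h2 := ENNReal.lintegral_mul_le_Lp_mul_Lq (volume.restrict (Ioc (0:ℝ) s)) conj22
      ((hHmeas.pow_const _).aemeasurable) ((hCmeas.pow_const _).aemeasurable)
      (f := fun t => (H t) ^ (1/2:ℝ)) (g := fun t => (C t) ^ (1/2:ℝ))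
    simp only [Pi.mul_apply, ← ENNReal.rpow_mul] at h2
    norm_num [ENNReal.rpow_one] at h2
    rw [lintegral_congr_ae hae] at h1
    have h3 : ∫⁻ t in Ioc (0:ℝ) s, C t = ENNReal.ofReal (2/π * Real.sin (π * s / 2)) := by
      rw [hC, ← ofReal_integral_eq_lintegral_ofReal]
      · rw [← intervalIntegral.integral_of_le hs.1, integral_cos_half]
      · exact (Continuous.integrableOn_Ioc (by fun_prop))
      · filter_upwards [ae_restrict_mem measurableSet_Ioc] with t ht
        apply Real.cos_nonneg_of_mem_Icc
        constructor
        · nlinarith [Real.pi_pos, ht.1]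
        · nlinarith [Real.pi_pos, ht.2.trans hs.2]
    rw [h3] at h2
    calc ((‖∫ t in (0:ℝ)..s, f t‖₊ : ℝ≥0∞)) ^ 2
        ≤ ((∫⁻ t in Ioc (0:ℝ) s, H t) ^ (1/2:ℝ) * (ENNReal.ofReal (2/π * Real.sin (π * s / 2))) ^ (1/2:ℝ)) ^ 2 :=
          pow_le_pow_left' (h1.trans h2) 2
      _ = G s * ∫⁻ t in Ioc (0:ℝ) s, H t := by
          rw [mul_pow, rpow_half_sq, rpow_half_sq, mul_comm, hG]
  -- Step 2 : integrate
  have step2 : ∫⁻ s in Icc (0:ℝ) 1, ((‖∫ t in (0:ℝ)..s, f t‖₊ : ℝ≥0∞)) ^ 2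
      ≤ ∫⁻ s in Icc (0:ℝ) 1, G s * ∫⁻ t in Ioc (0:ℝ) s, H t :=
    lintegral_mono_ae ((ae_restrict_mem measurableSet_Icc).mono step1)
  refine step2.trans ?_
  -- Step 3 : rewrite inner integral over μ with indicator
  have hinner : ∀ s ∈ Icc (0:ℝ) 1,
      G s * ∫⁻ t in Ioc (0:ℝ) s, H t = ∫⁻ t, G s * (Iic s).indicator H t ∂μ := by
    intro s hs
    rw [lintegral_const_mul' _ _ ENNReal.ofReal_ne_top]
    congr 1
    rw [lintegral_indicator measurableSet_Iic, hμ, Measure.restrict_restrict measurableSet_Iic]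
    have hset : Iic s ∩ Icc (0:ℝ) 1 = Icc (0:ℝ) s := by
      ext t
      simp only [mem_inter_iff, mem_Iic, mem_Icc]
      exact ⟨fun h => ⟨h.2.1, h.1⟩, fun h => ⟨h.2, h.1, h.2.trans hs.2⟩⟩
    rw [hset, ← Measure.restrict_congr_set Ioc_ae_eq_Icc]
  have heq1 : ∫⁻ s in Icc (0:ℝ) 1, G s * ∫⁻ t in Ioc (0:ℝ) s, H t
      = ∫⁻ s, (∫⁻ t, G s * (Iic s).indicator H t ∂μ) ∂μ := by
    apply lintegral_congr_ae
    filter_upwards [ae_restrict_mem measurableSet_Icc] with s hs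
    exact hinner s hs
  rw [heq1]
  -- Step 4 : Tonelli
  set F : ℝ × ℝ → ℝ≥0∞ := fun p => {q : ℝ × ℝ | q.2 ≤ q.1}.indicator (fun q => G q.1 * H q.2) p
    with hF
  have hFmeas : Measurable F := by
    apply Measurable.indicator
    · exact (hGmeas.comp measurable_fst).mul (hHmeas.comp measurable_snd)
    · exact measurableSet_le measurable_snd measurable_fst
  have hFval : ∀ s t : ℝ, F (s, t) = G s * (Iic s).indicator H t := by
    intro s t
    simp only [hF, Set.indicator_apply, mem_setOf_eq, mem_Iic]
    split_ifs <;> simp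
  simp only [← hFval]
  rw [lintegral_lintegral_swap (f := fun s t => F (s, t)) (μ := μ) (ν := μ)
    (by exact hFmeas.aemeasurable)]
  -- Step 5 : compute the inner integral in t
  have hfix : ∀ t ∈ Icc (0:ℝ) 1, t ≠ (1:ℝ) →
      ∫⁻ s, F (s, t) ∂μ = ENNReal.ofReal (2/π) ^ 2 * (‖f t‖₊ : ℝ≥0∞) ^ 2 := by
    intro t ht htne
    have hFt : ∀ s : ℝ, F (s, t) = (Ici t).indicator (fun s => G s * H t) s := by
      intro s
      simp only [hF, Set.indicator_apply, mem_setOf_eq, mem_Ici]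
    simp only [hFt]
    rw [lintegral_indicator measurableSet_Ici, hμ,
      Measure.restrict_restrict measurableSet_Ici]
    have hset : Ici t ∩ Icc (0:ℝ) 1 = Icc t 1 := by
      ext x
      simp only [mem_inter_iff, mem_Ici, mem_Icc]
      exact ⟨fun h => ⟨h.1, h.2.2⟩, fun h => ⟨h.1, ht.1.trans h.1, h.2⟩⟩
    rw [hset, lintegral_mul_const _ hGmeas]
    have hGint : ∫⁻ s in Icc t 1, G s
        = ENNReal.ofReal (2/π) * (ENNReal.ofReal (2/π) * C t) := by
      rw [hG, ← ofReal_integral_eq_lintegral_ofReal]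
      · rw [MeasureTheory.integral_Icc_eq_integral_Ioc,
          ← intervalIntegral.integral_of_le ht.2, intervalIntegral.integral_const_mul,
          integral_sin_half, hC, ENNReal.ofReal_mul (by positivity),
          ENNReal.ofReal_mul (by positivity)]
      · exact (Continuous.integrableOn_Icc (by fun_prop))
      · filter_upwards [ae_restrict_mem measurableSet_Icc] with s hs
        have h1 : 0 ≤ π * s / 2 := by nlinarith [Real.pi_pos, ht.1.trans hs.1]
        have h2 : π * s / 2 ≤ π := by nlinarith [Real.pi_pos, hs.2]
        have h3 : 0 ≤ Real.sin (π * s / 2) := Real.sin_nonneg_of_nonneg_of_le_pi h1 h2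
        have : (0:ℝ) < π := Real.pi_pos
        positivity
    rw [hGint]
    have hcos : 0 < Real.cos (π * t / 2) := by
      apply Real.cos_pos_of_mem_Ioo
      constructor
      · nlinarith [Real.pi_pos, ht.1]
      · have : t < 1 := lt_of_le_of_ne ht.2 htne
        nlinarith [Real.pi_pos]
    have hC0 : C t ≠ 0 := by simp [hC, ENNReal.ofReal_pos.2 hcos, ne_of_gt]
    have hCtop : C t ≠ ⊤ := ENNReal.ofReal_ne_top
    rw [hH]
    calc ENNReal.ofReal (2/π) * (ENNReal.ofReal (2/π) * C t) * ((‖f t‖₊ : ℝ≥0∞) ^ 2 * (C t)⁻¹)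
        = ENNReal.ofReal (2/π) ^ 2 * (‖f t‖₊ : ℝ≥0∞) ^ 2 * ((C t)⁻¹ * C t) := by ring
      _ = ENNReal.ofReal (2/π) ^ 2 * (‖f t‖₊ : ℝ≥0∞) ^ 2 := by
          rw [ENNReal.inv_mul_cancel hC0 hCtop, mul_one]
  have heq2 : ∫⁻ t, (∫⁻ s, F (s, t) ∂μ) ∂μ
      = ∫⁻ t, ENNReal.ofReal (2/π) ^ 2 * (‖f t‖₊ : ℝ≥0∞) ^ 2 ∂μ := by
    apply lintegral_congr_ae
    filter_upwards [ae_restrict_mem measurableSet_Icc, ae_restrict_of_ae hne1] with t ht htne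
    exact hfix t ht htne
  rw [heq2, lintegral_const_mul' _ _ (ENNReal.pow_ne_top ENNReal.ofReal_ne_top)]

/-- The operator norm of the Volterra integral operator `(A f)(s) = ∫_0^s f(t) dt`
on `L²([0,1], ℝ)` equals `2/π`. -/
theorem volterra_opNorm
    (A : Lp ℝ 2 (volume.restrict (Icc (0:ℝ) 1)) →L[ℝ] Lp ℝ 2 (volume.restrict (Icc (0:ℝ) 1)))
    (hA : ∀ f, ∀ᵐ s ∂(volume.restrict (Icc (0:ℝ) 1)), (A f) s = ∫ t in (0:ℝ)..s, f t) :
    ‖A‖ = 2 / Real.pi := by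
  have hπ : (0:ℝ) < π := Real.pi_pos
  -- Upper bound
  have hub : ∀ f : Lp ℝ 2 (volume.restrict (Icc (0:ℝ) 1)), ‖A f‖ ≤ 2 / π * ‖f‖ := by
    intro f
    have hfm : Measurable (⇑f) := (Lp.stronglyMeasurable f).measurable
    have key := volterra_upper_lintegral (⇑f) hfm
    have hexp : ∀ g : ℝ → ℝ, (∫⁻ x, (‖g x‖₊ : ℝ≥0∞) ^ ((2:ℝ≥0∞).toReal) ∂(volume.restrict (Icc (0:ℝ) 1)))
        = ∫⁻ x, (‖g x‖₊ : ℝ≥0∞) ^ 2 ∂(volume.restrict (Icc (0:ℝ) 1)) := by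
      intro g
      congr 1
      funext x
      rw [ENNReal.toReal_ofNat, show ((2:ℝ)) = ((2:ℕ):ℝ) by norm_num, ENNReal.rpow_natCast]
    have hsA : eLpNorm (⇑(A f)) 2 (volume.restrict (Icc (0:ℝ) 1))
        = (∫⁻ s in Icc (0:ℝ) 1, ((‖∫ t in (0:ℝ)..s, f t‖₊ : ℝ≥0∞)) ^ 2) ^ (1/2:ℝ) := by
      rw [eLpNorm_congr_ae (hA f),
        eLpNorm_eq_lintegral_rpow_enorm_toReal (by norm_num) (by norm_num)]
      erw [hexp (fun s => ∫ t in (0:ℝ)..s, f t)]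
      norm_num
    have hsf : eLpNorm (⇑f) 2 (volume.restrict (Icc (0:ℝ) 1))
        = (∫⁻ t in Icc (0:ℝ) 1, ((‖f t‖₊ : ℝ≥0∞)) ^ 2) ^ (1/2:ℝ) := by
      rw [eLpNorm_eq_lintegral_rpow_enorm_toReal (by norm_num) (by norm_num)]
      erw [hexp (⇑f)]
      norm_num
    have hchain : eLpNorm (⇑(A f)) 2 (volume.restrict (Icc (0:ℝ) 1)) ≤ ENNReal.ofReal (2/π) * eLpNorm (⇑f) 2 (volume.restrict (Icc (0:ℝ) 1)) := by
      rw [hsA, hsf, ← sq_rpow_half (ENNReal.ofReal (2/π)),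
        ← ENNReal.mul_rpow_of_nonneg _ _ (by norm_num : (0:ℝ) ≤ 1/2)]
      exact ENNReal.rpow_le_rpow key (by norm_num)
    have hfin : ENNReal.ofReal (2/π) * eLpNorm (⇑f) 2 (volume.restrict (Icc (0:ℝ) 1)) ≠ ⊤ :=
      ENNReal.mul_ne_top ENNReal.ofReal_ne_top (Lp.eLpNorm_ne_top f)
    calc ‖A f‖ = (eLpNorm (⇑(A f)) 2 (volume.restrict (Icc (0:ℝ) 1))).toReal := Lp.norm_def _
      _ ≤ (ENNReal.ofReal (2/π) * eLpNorm (⇑f) 2 (volume.restrict (Icc (0:ℝ) 1))).toReal := ENNReal.toReal_mono hfin hchain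
      _ = 2/π * ‖f‖ := by
          rw [ENNReal.toReal_mul, ENNReal.toReal_ofReal (by positivity), Lp.norm_def]
  refine le_antisymm (A.opNorm_le_bound (by positivity) hub) ?_
  -- Lower bound
  have hfinμ : IsFiniteMeasure (volume.restrict (Icc (0:ℝ) 1)) := by
    constructor
    rw [Measure.restrict_apply_univ]
    exact measure_Icc_lt_top
  have hg₀m : MemLp (fun t => Real.cos (π * t / 2)) 2 (volume.restrict (Icc (0:ℝ) 1)) :=
    MemLp.of_bound (Continuous.aestronglyMeasurable (by fun_prop)) 1
      (ae_of_all _ fun t => by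
        rw [Real.norm_eq_abs]; exact Real.abs_cos_le_one _)
  set f₀ : Lp ℝ 2 (volume.restrict (Icc (0:ℝ) 1)) := hg₀m.toLp _ with hf₀
  have hcoe : ⇑f₀ =ᵐ[(volume.restrict (Icc (0:ℝ) 1))] (fun t => Real.cos (π * t / 2)) := MemLp.coeFn_toLp hg₀m
  have hAf₀ : ⇑(A f₀) =ᵐ[(volume.restrict (Icc (0:ℝ) 1))] fun s => 2/π * Real.sin (π * s / 2) := by
    filter_upwards [hA f₀, ae_restrict_mem measurableSet_Icc] with s hs1 hs2
    rw [hs1]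
    have hsub : Ioc (0:ℝ) s ⊆ Icc (0:ℝ) 1 := fun x hx => ⟨le_of_lt hx.1, hx.2.trans hs2.2⟩
    have hae' : ⇑f₀ =ᵐ[volume.restrict (Ioc (0:ℝ) s)] (fun t => Real.cos (π * t / 2)) :=
      ae_restrict_of_ae_restrict_of_subset hsub hcoe
    rw [intervalIntegral.integral_of_le hs2.1, integral_congr_ae hae',
      ← intervalIntegral.integral_of_le hs2.1, integral_cos_half]
  have hn1 : ‖f₀‖ ^ 2 = 1/2 := by
    rw [← real_inner_self_eq_norm_sq, MeasureTheory.L2.inner_def]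
    simp only [RCLike.inner_apply, starRingEnd_apply, star_trivial]
    calc ∫ a, f₀ a * f₀ a ∂(volume.restrict (Icc (0:ℝ) 1)) = ∫ a in Icc (0:ℝ) 1, Real.cos (π * a / 2) ^ 2 := by
          apply MeasureTheory.integral_congr_ae
          filter_upwards [hcoe] with a ha
          rw [ha]; ring
      _ = ∫ a in Ioc (0:ℝ) 1, Real.cos (π * a / 2) ^ 2 := integral_Icc_eq_integral_Ioc
      _ = ∫ a in (0:ℝ)..1, Real.cos (π * a / 2) ^ 2 :=
          (intervalIntegral.integral_of_le zero_le_one).symm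
      _ = 1/2 := my_integral_cos_sq
  have hn2 : ‖A f₀‖ ^ 2 = (2/π) ^ 2 * (1/2) := by
    rw [← real_inner_self_eq_norm_sq, MeasureTheory.L2.inner_def]
    simp only [RCLike.inner_apply, starRingEnd_apply, star_trivial]
    calc ∫ a, (A f₀) a * (A f₀) a ∂(volume.restrict (Icc (0:ℝ) 1))
        = ∫ a in Icc (0:ℝ) 1, (2/π) ^ 2 * Real.sin (π * a / 2) ^ 2 := by
          apply MeasureTheory.integral_congr_ae
          filter_upwards [hAf₀] with a ha
          rw [ha]; ring
      _ = ∫ a in Ioc (0:ℝ) 1, (2/π) ^ 2 * Real.sin (π * a / 2) ^ 2 := integral_Icc_eq_integral_Ioc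
      _ = ∫ a in (0:ℝ)..1, (2/π) ^ 2 * Real.sin (π * a / 2) ^ 2 :=
          (intervalIntegral.integral_of_le zero_le_one).symm
      _ = (2/π) ^ 2 * ∫ a in (0:ℝ)..1, Real.sin (π * a / 2) ^ 2 :=
          intervalIntegral.integral_const_mul _ _
      _ = (2/π) ^ 2 * (1/2) := by rw [my_integral_sin_sq]
  have hnf₀ : ‖f₀‖ = Real.sqrt (1/2) := by
    rw [← hn1, Real.sqrt_sq (norm_nonneg _)]
  have hnAf₀ : ‖A f₀‖ = 2/π * Real.sqrt (1/2) := by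
    have hsq : ‖A f₀‖ ^ 2 = (2/π * Real.sqrt (1/2)) ^ 2 := by
      rw [hn2, mul_pow, Real.sq_sqrt (by norm_num : (0:ℝ) ≤ 1/2)]
    calc ‖A f₀‖ = Real.sqrt (‖A f₀‖ ^ 2) := (Real.sqrt_sq (norm_nonneg _)).symm
      _ = Real.sqrt ((2/π * Real.sqrt (1/2)) ^ 2) := by rw [hsq]
      _ = 2/π * Real.sqrt (1/2) := Real.sqrt_sq (by positivity)
  have h := A.ratio_le_opNorm f₀
  rw [hnAf₀, hnf₀] at h
  have hs : Real.sqrt (1/2) ≠ 0 := by positivity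
  rwa [mul_div_assoc, div_self hs, mul_one] at h
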